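/- Let s, g ∈ ℝ and define the Stark first integral Ã(q,p) := (q₁p₂ − q₂p₁)·p₂ − s·q₁/√(q₁² + q₂²) + (g/2)·q₂² for q ∈ ℝ² \ {0}, p ∈ ℝ². Then: (i) for every twice-differentiable curve q : I → ℝ² \ {0} satisfying the Stark equations q₁''(t) = g − s·q₁(t)/‖q(t)‖³ and q₂''(t) = −s·q₂(t)/‖q(t)‖³, the function t ↦ Ã(q(t), q'(t)) is constant; (ii) for every c ≠ 0 and every point q ≠ 0 on either focused parabola {q₁ = c² − q₂²/(4c²)} or {q₁ = q₂²/(4c²) − c²}, the elastic reflection p' of any p ∈ ℝ² at that parabola at q satisfies Ã(q,p') = Ã(q,p). Hence the Stark problem admits any focused parabola with the q₁-axis as its axis as an integrable reflection wall. -/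

import Mathlib

/-- The Stark first integral
`Ã(q,p) = (q₁p₂ − q₂p₁)·p₂ − s·q₁/√(q₁²+q₂²) + (g/2)·q₂²`. -/
noncomputable def starkA (s g : ℝ) (q p : ℝ × ℝ) : ℝ :=
  (q.1 * p.2 - q.2 * p.1) * p.2 - s * q.1 / Real.sqrt (q.1 ^ 2 + q.2 ^ 2)
    + g / 2 * q.2 ^ 2

lemma stark_deriv_zero (s g : ℝ) {I : Set ℝ} (q v : ℝ → ℝ × ℝ)
    (hq0 : ∀ t ∈ I, q t ≠ 0)
    (hq : ∀ t ∈ I, HasDerivWithinAt q (v t) I t)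
    (hv : ∀ t ∈ I, HasDerivWithinAt v
        ((g - s * (q t).1 / Real.sqrt ((q t).1 ^ 2 + (q t).2 ^ 2) ^ 3,
          -(s * (q t).2 / Real.sqrt ((q t).1 ^ 2 + (q t).2 ^ 2) ^ 3)) : ℝ × ℝ) I t)
    {t : ℝ} (ht : t ∈ I) :
    HasDerivWithinAt (fun t => starkA s g (q t) (v t)) 0 I t := by
  have h1 : ((q t).1 ^ 2 + (q t).2 ^ 2) ≠ 0 := by
    intro h
    have hz1 : (q t).1 = 0 := by nlinarith [sq_nonneg (q t).1, sq_nonneg (q t).2]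
    have hz2 : (q t).2 = 0 := by nlinarith [sq_nonneg (q t).1, sq_nonneg (q t).2]
    exact hq0 t ht (Prod.ext hz1 hz2)
  have hsum : (0:ℝ) < (q t).1 ^ 2 + (q t).2 ^ 2 :=
    lt_of_le_of_ne (by positivity) (Ne.symm h1)
  set r : ℝ := Real.sqrt ((q t).1 ^ 2 + (q t).2 ^ 2) with hrdef
  have hr0 : 0 < r := Real.sqrt_pos.mpr hsum
  have hrne : r ≠ 0 := ne_of_gt hr0
  have hr2 : r ^ 2 = (q t).1 ^ 2 + (q t).2 ^ 2 := Real.sq_sqrt hsum.le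
  -- component derivatives
  have hq1 : HasDerivWithinAt (fun u => (q u).1) (v t).1 I t := by
    exact ((ContinuousLinearMap.fst ℝ ℝ ℝ).hasFDerivAt).comp_hasDerivWithinAt t (hq t ht)
  have hq2 : HasDerivWithinAt (fun u => (q u).2) (v t).2 I t := by
    exact ((ContinuousLinearMap.snd ℝ ℝ ℝ).hasFDerivAt).comp_hasDerivWithinAt t (hq t ht)
  have hv1 : HasDerivWithinAt (fun u => (v u).1) (g - s * (q t).1 / r ^ 3) I t := by
    exact ((ContinuousLinearMap.fst ℝ ℝ ℝ).hasFDerivAt).comp_hasDerivWithinAt t (hv t ht)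
  have hv2 : HasDerivWithinAt (fun u => (v u).2) (-(s * (q t).2 / r ^ 3)) I t := by
    exact ((ContinuousLinearMap.snd ℝ ℝ ℝ).hasFDerivAt).comp_hasDerivWithinAt t (hv t ht)
  have hA : HasDerivWithinAt
      (fun u => ((q u).1 * (v u).2 - (q u).2 * (v u).1) * (v u).2)
      (((v t).1 * (v t).2 + (q t).1 * (-(s * (q t).2 / r ^ 3))
         - ((v t).2 * (v t).1 + (q t).2 * (g - s * (q t).1 / r ^ 3))) * (v t).2
        + ((q t).1 * (v t).2 - (q t).2 * (v t).1) * (-(s * (q t).2 / r ^ 3))) I t :=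
    ((hq1.mul hv2).sub (hq2.mul hv1)).mul hv2
  have hrr : HasDerivWithinAt (fun u => Real.sqrt ((q u).1 ^ 2 + (q u).2 ^ 2))
      ((2 * (q t).1 ^ 1 * (v t).1 + 2 * (q t).2 ^ 1 * (v t).2) / (2 * r)) I t :=
    ((hq1.pow 2).add (hq2.pow 2)).sqrt h1
  have hB : HasDerivWithinAt
      (fun u => s * (q u).1 / Real.sqrt ((q u).1 ^ 2 + (q u).2 ^ 2))
      ((s * (v t).1 * r - s * (q t).1 *
        ((2 * (q t).1 ^ 1 * (v t).1 + 2 * (q t).2 ^ 1 * (v t).2) / (2 * r))) / r ^ 2) I t :=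
    (hq1.const_mul s).div hrr hrne
  have hC : HasDerivWithinAt (fun u => g / 2 * (q u).2 ^ 2)
      (g / 2 * (2 * (q t).2 ^ 1 * (v t).2)) I t :=
    (hq2.pow 2).const_mul (g / 2)
  have hF := (hA.sub hB).add hC
  have hE : ((v t).1 * (v t).2 + (q t).1 * (-(s * (q t).2 / r ^ 3))
         - ((v t).2 * (v t).1 + (q t).2 * (g - s * (q t).1 / r ^ 3))) * (v t).2
        + ((q t).1 * (v t).2 - (q t).2 * (v t).1) * (-(s * (q t).2 / r ^ 3))
        - (s * (v t).1 * r - s * (q t).1 *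
          ((2 * (q t).1 ^ 1 * (v t).1 + 2 * (q t).2 ^ 1 * (v t).2) / (2 * r))) / r ^ 2
        + g / 2 * (2 * (q t).2 ^ 1 * (v t).2) = 0 := by
    field_simp
    linear_combination (-((v t).1 * s)) * hr2
  unfold starkA
  rw [← hE]
  exact hF

/-- The Stark problem `q₁'' = g − s·q₁/‖q‖³, q₂'' = −s·q₂/‖q‖³` admits any focused
parabola with the `q₁`-axis as its axis as an integrable reflection wall: `Ã` is
constant along Stark trajectories and invariant under elastic reflections at the
focused parabolae `{q₁ = c² − q₂²/(4c²)}` and `{q₁ = q₂²/(4c²) − c²}`. -/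
theorem stmt_15 (s g : ℝ) :
    (∀ I : Set ℝ, Convex ℝ I → ∀ q v : ℝ → ℝ × ℝ,
      (∀ t ∈ I, q t ≠ 0) →
      (∀ t ∈ I, HasDerivWithinAt q (v t) I t) →
      (∀ t ∈ I, HasDerivWithinAt v
        ((g - s * (q t).1 / Real.sqrt ((q t).1 ^ 2 + (q t).2 ^ 2) ^ 3,
          -(s * (q t).2 / Real.sqrt ((q t).1 ^ 2 + (q t).2 ^ 2) ^ 3)) : ℝ × ℝ) I t) →
      ∀ t ∈ I, ∀ t' ∈ I, starkA s g (q t) (v t) = starkA s g (q t') (v t')) ∧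
    (∀ c : ℝ, c ≠ 0 → ∀ q p : ℝ × ℝ, q ≠ 0 →
      q.1 = c ^ 2 - q.2 ^ 2 / (4 * c ^ 2) →
      ∀ n p' : ℝ × ℝ, n = (1, q.2 / (2 * c ^ 2)) →
      p' = p - (2 * ((p.1 * n.1 + p.2 * n.2) / (n.1 ^ 2 + n.2 ^ 2))) • n →
      starkA s g q p' = starkA s g q p) ∧
    (∀ c : ℝ, c ≠ 0 → ∀ q p : ℝ × ℝ, q ≠ 0 →
      q.1 = q.2 ^ 2 / (4 * c ^ 2) - c ^ 2 →
      ∀ n p' : ℝ × ℝ, n = (1, -q.2 / (2 * c ^ 2)) →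
      p' = p - (2 * ((p.1 * n.1 + p.2 * n.2) / (n.1 ^ 2 + n.2 ^ 2))) • n →
      starkA s g q p' = starkA s g q p) := by
  refine ⟨?_, ?_, ?_⟩
  · intro I hI q v hq0 hq hv t ht t' ht'
    have h := hI.norm_image_sub_le_of_norm_hasDerivWithin_le
      (f := fun u => starkA s g (q u) (v u)) (f' := fun _ => (0:ℝ)) (C := 0)
      (fun x hx => stark_deriv_zero s g q v hq0 hq hv hx)
      (fun x _ => by simp) ht' ht
    simp only [norm_zero, zero_mul] at h
    have := le_antisymm h (norm_nonneg _)
    have := norm_eq_zero.mp this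
    linarith [sub_eq_zero.mp this]
  · intro c hc q p hq0 hq1 n p' hn hp'
    subst hn; subst hp'
    have hd : (1:ℝ) + (q.2 / (2 * c ^ 2)) ^ 2 ≠ 0 := by positivity
    simp only [starkA, Prod.fst_sub, Prod.snd_sub, Prod.smul_mk, smul_eq_mul, Prod.mk_sub_mk]
    rw [hq1]
    field_simp
    ring
  · intro c hc q p hq0 hq1 n p' hn hp'
    subst hn; subst hp'
    have hd : (1:ℝ) + (-q.2 / (2 * c ^ 2)) ^ 2 ≠ 0 := by positivity
    simp only [starkA, Prod.fst_sub, Prod.snd_sub, Prod.smul_mk, smul_eq_mul, Prod.mk_sub_mk]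
    rw [hq1]
    field_simp
    ring
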